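/- Let a > 0 and b > 0, and let X have the beta distribution of the first kind with density f(x) = (Γ(a+b)/(Γ(a)Γ(b))) x^{a−1} (1−x)^{b−1} on (0,1). Then for every t with 0 < t < 1, E(X | X > t) = a/(a+b) + (t(1−t)/(a+b)) r(t). -/

import Mathlib

open MeasureTheory

private lemma beta_integrableOn (p q t : ℝ) (hq : -1 < q) (ht : 0 < t) (ht1 : t < 1) :
    IntegrableOn (fun x => x ^ p * (1 - x) ^ q) (Set.Ioo t 1) := by
  have hg : IntegrableOn (fun x : ℝ => (1 - x) ^ q) (Set.Ioo t 1) := by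
    have h0 : IntervalIntegrable (fun x : ℝ => x ^ q) volume 0 (1 - t) :=
      intervalIntegral.intervalIntegrable_rpow' hq
    have h1 := h0.comp_sub_left 1
    simp only [sub_zero, sub_sub_cancel] at h1
    have h2 := h1.symm
    rwa [intervalIntegrable_iff_integrableOn_Ioo_of_le ht1.le] at h2
  have hc : ContinuousOn (fun x : ℝ => x ^ p * (1 - x) ^ q) (Set.Ioo t 1) := by
    apply ContinuousOn.mul
    · exact ContinuousOn.rpow_const continuousOn_id
        (fun x hx => Or.inl (ne_of_gt (lt_trans ht hx.1)))
    · exact ContinuousOn.rpow_const (continuousOn_const.sub continuousOn_id)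
        (fun x hx => Or.inl (ne_of_gt (by linarith [hx.2] : (0:ℝ) < 1 - x)))
  set M : ℝ := t ^ p + 1 with hM
  refine ((hg.const_mul M).mono (hc.aestronglyMeasurable measurableSet_Ioo) ?_)
  filter_upwards [ae_restrict_mem measurableSet_Ioo] with x hx
  have hx0 : 0 < x := lt_trans ht hx.1
  have hx1 : 0 < 1 - x := by linarith [hx.2]
  have hxM : x ^ p ≤ M := by
    rcases le_or_gt 0 p with hp | hp
    · have h1 : x ^ p ≤ 1 := Real.rpow_le_one hx0.le hx.2.le hp
      have h2 : (0:ℝ) ≤ t ^ p := Real.rpow_nonneg ht.le p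
      simp only [hM]; linarith
    · have h1 : x ^ p ≤ t ^ p := Real.rpow_le_rpow_of_nonpos ht hx.1.le hp.le
      simp only [hM]; linarith
  have h1q : (0:ℝ) ≤ (1 - x) ^ q := Real.rpow_nonneg hx1.le q
  have hxp : (0:ℝ) ≤ x ^ p := Real.rpow_nonneg hx0.le p
  rw [Real.norm_eq_abs, Real.norm_eq_abs, abs_of_nonneg (mul_nonneg hxp h1q)]
  calc x ^ p * (1 - x) ^ q ≤ M * (1 - x) ^ q := mul_le_mul_of_nonneg_right hxM h1q
    _ ≤ |M * (1 - x) ^ q| := le_abs_self _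

private lemma beta_key (a b t : ℝ) (ha : 0 < a) (hb : 0 < b) (ht : 0 < t) (ht1 : t < 1) :
    ∫ x in Set.Ioo t 1,
      (a * (x ^ (a-1) * (1-x) ^ (b-1)) - (a+b) * (x * (x ^ (a-1) * (1-x) ^ (b-1))))
      = - (t ^ a * (1-t) ^ b) := by
  set g : ℝ → ℝ := fun x => a * x ^ (a-1) * (1-x) ^ b + x ^ a * (b * (1-x) ^ (b-1) * (-1))
    with hg
  have hint1 : IntegrableOn (fun x : ℝ => a * x ^ (a-1) * (1-x) ^ b) (Set.Ioo t 1) := by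
    have h : IntegrableOn (fun x : ℝ => a * (x ^ (a-1) * (1-x) ^ b)) (Set.Ioo t 1) :=
      (beta_integrableOn (a-1) b t (by linarith) ht ht1).const_mul a
    exact h.congr_fun (fun x _ => by ring) measurableSet_Ioo
  have hint2 : IntegrableOn (fun x : ℝ => x ^ a * (b * (1-x) ^ (b-1) * (-1)))
      (Set.Ioo t 1) := by
    have h : IntegrableOn (fun x : ℝ => (-b) * (x ^ a * (1-x) ^ (b-1))) (Set.Ioo t 1) :=
      (beta_integrableOn a (b-1) t (by linarith) ht ht1).const_mul (-b)
    exact h.congr_fun (fun x _ => by ring) measurableSet_Ioo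
  have hgint : IntegrableOn g (Set.Ioo t 1) := hint1.add hint2
  have hcont : ContinuousOn (fun x : ℝ => x ^ a * (1-x) ^ b) (Set.Icc t 1) := by
    apply ContinuousOn.mul
    · exact ContinuousOn.rpow_const continuousOn_id
        (fun x hx => Or.inl (ne_of_gt (lt_of_lt_of_le ht hx.1)))
    · exact ContinuousOn.rpow_const (continuousOn_const.sub continuousOn_id)
        (fun x _ => Or.inr hb.le)
  have hderiv : ∀ x ∈ Set.Ioo t 1, HasDerivAt (fun x : ℝ => x ^ a * (1-x) ^ b) (g x) x := by
    intro x hx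
    have hx0 : x ≠ 0 := ne_of_gt (lt_trans ht hx.1)
    have h1 : HasDerivAt (fun x : ℝ => x ^ a) (a * x ^ (a-1)) x :=
      Real.hasDerivAt_rpow_const (Or.inl hx0)
    have h1x0 : (1:ℝ) - x ≠ 0 := ne_of_gt (by linarith [hx.2] : (0:ℝ) < 1 - x)
    have hsub : HasDerivAt (fun x : ℝ => 1 - x) (-1) x := (hasDerivAt_id x).const_sub 1
    have h2 : HasDerivAt (fun x : ℝ => (1-x) ^ b) (b * (1-x) ^ (b-1) * (-1)) x :=
      (Real.hasDerivAt_rpow_const (p := b) (Or.inl h1x0)).comp x hsub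
    exact h1.mul h2
  have hftc := intervalIntegral.integral_eq_sub_of_hasDerivAt_of_le ht1.le hcont hderiv
    (by rw [intervalIntegrable_iff_integrableOn_Ioo_of_le ht1.le]; exact hgint)
  have h1v : (1:ℝ) ^ a * (1-(1:ℝ)) ^ b = 0 := by
    rw [sub_self, Real.zero_rpow (ne_of_gt hb), mul_zero]
  rw [intervalIntegral.integral_of_le ht1.le, integral_Ioc_eq_integral_Ioo] at hftc
  have heq : Set.EqOn g (fun x =>
      a * (x ^ (a-1) * (1-x) ^ (b-1)) - (a+b) * (x * (x ^ (a-1) * (1-x) ^ (b-1))))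
      (Set.Ioo t 1) := by
    intro x hx
    have hx0 : 0 < x := lt_trans ht hx.1
    have hx1 : 0 < 1 - x := by linarith [hx.2]
    have e1 : x ^ a = x ^ (a-1) * x := by
      rw [← Real.rpow_add_one (ne_of_gt hx0) (a-1)]; norm_num
    have e2 : (1-x) ^ b = (1-x) ^ (b-1) * (1-x) := by
      rw [← Real.rpow_add_one (ne_of_gt hx1) (b-1)]; norm_num
    simp only [hg]
    rw [e1, e2]; ring
  rw [setIntegral_congr_fun measurableSet_Ioo heq] at hftc
  rw [hftc, h1v]; ring

/-- For the beta distribution of the first kind with density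
`f(x) = (Γ(a+b)/(Γ(a)Γ(b))) x^(a-1) (1-x)^(b-1)` on `(0,1)`, for every
`0 < t < 1`: `E(X | X > t) = a/(a+b) + (t(1-t)/(a+b)) r(t)`. -/
theorem conditional_mean_of_beta_first_kind
    (a b : ℝ) (ha : 0 < a) (hb : 0 < b)
    (f : ℝ → ℝ)
    (hf : ∀ x ∈ Set.Ioo (0 : ℝ) 1,
      f x = Real.Gamma (a + b) / (Real.Gamma a * Real.Gamma b)
        * x ^ (a - 1) * (1 - x) ^ (b - 1))
    (hf_supp : ∀ x, x ∉ Set.Ioo (0 : ℝ) 1 → f x = 0)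
    (Fbar : ℝ → ℝ) (hFbar : ∀ t, Fbar t = ∫ x in Set.Ioo t 1, f x)
    (r : ℝ → ℝ) (hr : ∀ t, r t = f t / Fbar t)
    (t : ℝ) (ht : t ∈ Set.Ioo (0 : ℝ) 1) :
    (∫ x in Set.Ioo t 1, x * f x) / Fbar t
      = a / (a + b) + (t * (1 - t) / (a + b)) * r t := by
  obtain ⟨ht0, ht1⟩ := ht
  set C : ℝ := Real.Gamma (a + b) / (Real.Gamma a * Real.Gamma b) with hC
  have hCpos : 0 < C :=
    div_pos (Real.Gamma_pos_of_pos (by linarith))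
      (mul_pos (Real.Gamma_pos_of_pos ha) (Real.Gamma_pos_of_pos hb))
  set φ : ℝ → ℝ := fun x => x ^ (a-1) * (1-x) ^ (b-1) with hφ
  set I1 : ℝ := ∫ x in Set.Ioo t 1, φ x with hI1
  set I2 : ℝ := ∫ x in Set.Ioo t 1, x * φ x with hI2
  have hsub : Set.Ioo t 1 ⊆ Set.Ioo (0:ℝ) 1 := Set.Ioo_subset_Ioo ht0.le le_rfl
  have hFt : Fbar t = C * I1 := by
    rw [hFbar t, hI1, ← integral_const_mul]
    refine setIntegral_congr_fun measurableSet_Ioo (fun x hx => ?_)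
    rw [hf x (hsub hx)]; simp only [hφ]; ring
  have hXf : (∫ x in Set.Ioo t 1, x * f x) = C * I2 := by
    rw [hI2, ← integral_const_mul]
    refine setIntegral_congr_fun measurableSet_Ioo (fun x hx => ?_)
    rw [hf x (hsub hx)]; simp only [hφ]; ring
  have hft : f t = C * φ t := by
    rw [hf t ⟨ht0, ht1⟩]; simp only [hφ]; ring
  have hI1int : IntegrableOn φ (Set.Ioo t 1) :=
    beta_integrableOn (a-1) (b-1) t (by linarith) ht0 ht1
  have hI2int : IntegrableOn (fun x => x * φ x) (Set.Ioo t 1) := by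
    have h := beta_integrableOn a (b-1) t (by linarith) ht0 ht1
    refine h.congr_fun (fun x hx => ?_) measurableSet_Ioo
    have hx0 : 0 < x := lt_trans ht0 hx.1
    have e1 : x ^ a = x ^ (a-1) * x := by
      rw [← Real.rpow_add_one (ne_of_gt hx0) (a-1)]; norm_num
    simp only [hφ]; rw [e1]; ring
  have hI1pos : 0 < I1 := by
    rw [hI1]
    refine (setIntegral_pos_iff_support_of_nonneg_ae ?_ hI1int).2 ?_
    · filter_upwards [ae_restrict_mem measurableSet_Ioo] with x hx
      have hx0 : 0 < x := lt_trans ht0 hx.1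
      have hx1 : 0 < 1 - x := by linarith [hx.2]
      exact mul_nonneg (Real.rpow_nonneg hx0.le _) (Real.rpow_nonneg hx1.le _)
    · have hss : Set.Ioo t 1 ⊆ Function.support φ := by
        intro x hx
        have hx0 : 0 < x := lt_trans ht0 hx.1
        have hx1 : 0 < 1 - x := by linarith [hx.2]
        exact ne_of_gt (mul_pos (Real.rpow_pos_of_pos hx0 _) (Real.rpow_pos_of_pos hx1 _))
      have hi : Function.support φ ∩ Set.Ioo t 1 = Set.Ioo t 1 :=
        Set.inter_eq_self_of_subset_right hss
      rw [hi, Real.volume_Ioo]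
      simp [ht1]
  have hkey : a * I1 - (a+b) * I2 = - (t ^ a * (1-t) ^ b) := by
    have h := beta_key a b t ha hb ht0 ht1
    rw [← h, hI1, hI2]
    simp only [hφ]
    rw [← integral_const_mul, ← integral_const_mul,
      ← integral_sub (hI1int.const_mul a) (hI2int.const_mul (a+b))]
  have hrt : t ^ a * (1-t) ^ b = t * (1-t) * φ t := by
    have e1 : t ^ a = t ^ (a-1) * t := by
      rw [← Real.rpow_add_one (ne_of_gt ht0) (a-1)]; norm_num
    have e2 : (1-t) ^ b = (1-t) ^ (b-1) * (1-t) := by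
      rw [← Real.rpow_add_one (ne_of_gt (by linarith : (0:ℝ) < 1-t)) (b-1)]; norm_num
    simp only [hφ]; rw [e1, e2]; ring
  have hFne : Fbar t ≠ 0 := by
    rw [hFt]; exact ne_of_gt (mul_pos hCpos hI1pos)
  have habne : a + b ≠ 0 := by positivity
  rw [hr t, hft, hXf, hFt]
  have hI1ne : I1 ≠ 0 := ne_of_gt hI1pos
  have hCne : C ≠ 0 := ne_of_gt hCpos
  field_simp
  linear_combination hrt - hkey
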